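/- Fix w ∈ ℂ^N, an N×N Hermitian matrix R̂, and k > 0. The function f(R) = w^H R w - k · Tr((R - R̂)^H (R - R̂)) over N×N complex matrices R attains its global maximum at R* = R̂ + (1/(2k)) w w^H, and the maximum value equals w^H R̂ w + (1/(4k)) (w^H w)². -/

import Mathlib

open Matrix
open scoped ComplexOrder

/-- Quadratic form `wᴴ R w` (real part). -/
noncomputable def qf {N : ℕ} (R : Matrix (Fin N) (Fin N) ℂ) (w : Fin N → ℂ) : ℝ :=
  (star w ⬝ᵥ R.mulVec w).re

private lemma tr_self_nonneg {N : ℕ} (M : Matrix (Fin N) (Fin N) ℂ) :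
    0 ≤ ((Mᴴ * M).trace).re := by
  simp only [Matrix.trace, Matrix.diag, Matrix.mul_apply, Matrix.conjTranspose_apply,
    Complex.re_sum]
  apply Finset.sum_nonneg; intro i _
  apply Finset.sum_nonneg; intro j _
  simpa [RCLike.star_def, Complex.normSq_eq_conj_mul_self, Complex.normSq_apply] using Complex.normSq_nonneg (M j i)

private lemma trW {N : ℕ} (w : Fin N → ℂ) (D : Matrix (Fin N) (Fin N) ℂ) :
    (vecMulVec w (star w) * D).trace = star w ⬝ᵥ D.mulVec w := by
  simp only [Matrix.trace, Matrix.diag, Matrix.mul_apply, vecMulVec_apply, dotProduct,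
    mulVec, Pi.star_apply, Finset.mul_sum, Finset.sum_mul]
  rw [Finset.sum_comm]
  congr 1; ext j; congr 1; ext i; ring

theorem stmt5 {N : ℕ} (w : Fin N → ℂ) (Rh : Matrix (Fin N) (Fin N) ℂ)
    (hRh : Rh.IsHermitian) (k : ℝ) (hk : 0 < k)
    (f : Matrix (Fin N) (Fin N) ℂ → ℝ)
    (hf : f = fun R => qf R w - k * ((R - Rh)ᴴ * (R - Rh)).trace.re)
    (Rstar : Matrix (Fin N) (Fin N) ℂ)
    (hRstar : Rstar = Rh + (1 / (2 * k)) • vecMulVec w (star w)) :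
    (∀ R : Matrix (Fin N) (Fin N) ℂ, f R ≤ f Rstar) ∧
    f Rstar = qf Rh w + (1 / (4 * k)) * (qf (1 : Matrix (Fin N) (Fin N) ℂ) w) ^ 2 := by
  have hk0 : k ≠ 0 := ne_of_gt hk
  subst hf hRstar
  set W : Matrix (Fin N) (Fin N) ℂ := vecMulVec w (star w) with hW
  set c : ℝ := 1 / (2 * k) with hc
  have hWH : Wᴴ = W := by
    ext i j; simp [hW, vecMulVec_apply, Matrix.conjTranspose_apply, mul_comm]
  have hcWH : (c • W)ᴴ = c • W := by
    rw [Matrix.conjTranspose_smul, star_trivial, hWH]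
  have hsim : ∀ (r : ℝ) (z : ℂ), (r • z).re = r * z.re := fun r z => by
    simp [Complex.real_smul, Complex.mul_re]
  -- expansion of the Frobenius term
  have expand : ∀ D : Matrix (Fin N) (Fin N) ℂ,
      (((D + c • W)ᴴ * (D + c • W)).trace).re
        = ((Dᴴ * D).trace).re + 2 * c * ((W * D).trace).re
          + c ^ 2 * ((W * W).trace).re := by
    intro D
    have h1 : (Dᴴ * (c • W)).trace.re = c * ((W * D).trace).re := by
      have : (Dᴴ * (c • W)).trace = c • (Dᴴ * Wᴴ).trace := by
        rw [hWH, Matrix.mul_smul, Matrix.trace_smul]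
      rw [this, hsim, ← Matrix.conjTranspose_mul, Matrix.trace_conjTranspose]
      simp
    have h2 : ((c • W)ᴴ * D).trace.re = c * ((W * D).trace).re := by
      rw [hcWH, Matrix.smul_mul, Matrix.trace_smul, hsim]
    have h3 : ((c • W)ᴴ * (c • W)).trace.re = c ^ 2 * ((W * W).trace).re := by
      rw [hcWH, Matrix.smul_mul, Matrix.mul_smul, smul_smul, Matrix.trace_smul, hsim]
      ring
    rw [Matrix.conjTranspose_add, add_mul, mul_add, mul_add, Matrix.trace_add,
      Matrix.trace_add, Matrix.trace_add]
    simp only [Complex.add_re]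
    rw [h1, h2, h3]; ring
  have hcW : (((c • W)ᴴ * (c • W)).trace).re = c ^ 2 * ((W * W).trace).re := by
    have := expand 0
    simpa using this
  -- value of `(W * W).trace`
  have hs : star w ⬝ᵥ w = (star w ⬝ᵥ w) := rfl
  have hWv : W.mulVec w = (star w ⬝ᵥ w) • w := by
    ext i
    simp only [hW, mulVec, vecMulVec_apply, dotProduct, Pi.star_apply, Pi.smul_apply,
      smul_eq_mul, Finset.sum_mul]
    exact Finset.sum_congr rfl fun j _ => by ring
  have hWW : (W * W).trace = (star w ⬝ᵥ w) * (star w ⬝ᵥ w) := by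
    rw [hW, trW, ← hW, hWv, dotProduct_smul, smul_eq_mul]
  have him : (star w ⬝ᵥ w).im = 0 := by
    simp only [dotProduct, Pi.star_apply, Complex.im_sum]
    apply Finset.sum_eq_zero; intro i _
    simp [RCLike.star_def, Complex.mul_im]
    ring
  have hWWre : ((W * W).trace).re = (star w ⬝ᵥ w).re ^ 2 := by
    rw [hWW, Complex.mul_re, him]; ring
  have hq1 : qf (1 : Matrix (Fin N) (Fin N) ℂ) w = (star w ⬝ᵥ w).re := by
    simp [qf, Matrix.one_mulVec]
  -- qf splits over the translate
  have hqadd : ∀ A B : Matrix (Fin N) (Fin N) ℂ, qf (A + B) w = qf A w + qf B w := by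
    intro A B
    simp [qf, Matrix.add_mulVec, dotProduct_add]
  have hqcW : qf (c • W) w = c * (star w ⬝ᵥ w).re ^ 2 := by
    have : (c • W).mulVec w = c • (W.mulVec w) := by
      ext i; simp [mulVec, dotProduct, Matrix.smul_apply, Complex.real_smul,
        Finset.mul_sum]; congr 1; ext j; ring
    rw [qf, this, dotProduct_smul, hsim, hWv, dotProduct_smul, smul_eq_mul,
      Complex.mul_re, him]
    ring
  constructor
  · intro R
    set D : Matrix (Fin N) (Fin N) ℂ := R - (Rh + c • W) with hD
    have hRD : R - Rh = D + c • W := by rw [hD]; abel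
    have hRq : qf R w = qf (Rh + c • W) w + ((W * D).trace).re := by
      have : R = (Rh + c • W) + D := by rw [hD]; abel
      rw [this, hqadd]
      congr 1
      rw [hW, trW]; rfl
    simp only [add_sub_cancel_left]
    rw [hRD, expand D, hcW, hRq]
    have htr : 0 ≤ ((Dᴴ * D).trace).re := tr_self_nonneg D
    have hkc2 : k * c = 1 / 2 := by rw [hc]; field_simp
    have e1 : k * c * ((W * D).trace.re) = 1 / 2 * ((W * D).trace.re) := by rw [hkc2]
    linarith [mul_nonneg hk.le htr, e1]
  · simp only [add_sub_cancel_left]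
    rw [hqadd, hqcW, hcW, hWWre, hq1, hc]
    field_simp
    ring
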